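/- arXiv:2508.03359 — 3 statements merged into one kernel-verified Lean document; each statement's English description precedes it below -/
import Mathlib

section
/- For any integer m ≥ 1 and real u with 1/2 < u < 1, define g_m(u) = u^m(2u-1)/(u^m - (1-u)^m). Define α_i = B^{g_m(u)(1-u)^{i-1} u^{-i}} for 1 ≤ i ≤ m-1 and α_m = B/(α_1⋯α_{m-1}), where B > 1. Then α_1^u = α_1^{2u-1} α_2^u = ⋯ = (α_1⋯α_{m-1})^{2u-1} α_m^u = B^{g_m(u)}. -/
theorem stmt_0 (m : ℕ) (hm : 1 ≤ m) (u B g : ℝ)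
    (hu1 : 1/2 < u) (hu2 : u < 1) (hB : 1 < B)
    (hg : g = u ^ m * (2 * u - 1) / (u ^ m - (1 - u) ^ m))
    (α : ℕ → ℝ)
    (hα : ∀ i, 1 ≤ i → i ≤ m - 1 →
      α i = B ^ (g * (1 - u) ^ (i - 1) * u ^ (-(i : ℝ))))
    (hαm : α m = B / ∏ i ∈ Finset.Icc 1 (m - 1), α i) :
    ∀ k, 1 ≤ k → k ≤ m →
      (∏ i ∈ Finset.Icc 1 (k - 1), α i) ^ (2 * u - 1) * α k ^ u = B ^ g := by
  have hu0 : (0:ℝ) < u := by linarith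
  have hu0' : u ≠ 0 := ne_of_gt hu0
  have h2u : (0:ℝ) < 2 * u - 1 := by linarith
  have h2u' : (2 * u - 1 : ℝ) ≠ 0 := ne_of_gt h2u
  have h1u : (0:ℝ) < 1 - u := by linarith
  have hB0 : (0:ℝ) < B := by linarith
  -- exponent rewrite for α i, i ≥ 1
  have hexp : ∀ j : ℕ, g * (1 - u) ^ ((j+1) - 1) * u ^ (-((j+1 : ℕ) : ℝ))
      = g / (2*u-1) * (((1-u)/u)^j - ((1-u)/u)^(j+1)) := by
    intro j
    rw [Real.rpow_neg hu0.le, Real.rpow_natCast, Nat.add_sub_cancel, div_pow, div_pow]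
    have hup : (0:ℝ) < u ^ (j+1) := pow_pos hu0 _
    field_simp
    have hinv : (2*u-1)⁻¹ * (2*u-1) = 1 := inv_mul_cancel₀ h2u'
    linear_combination (-(g * u ^ j * (1 - u) ^ j)) * hinv
  -- product formula
  have hprod : ∀ k, k ≤ m - 1 → ∏ i ∈ Finset.Icc 1 k, α i
      = B ^ (g / (2*u-1) * (1 - ((1-u)/u)^k)) := by
    intro k hk
    have h1 : ∏ i ∈ Finset.Icc 1 k, α i
        = ∏ i ∈ Finset.Icc 1 k, B ^ (g * (1 - u) ^ (i - 1) * u ^ (-(i : ℝ))) := by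
      refine Finset.prod_congr rfl ?_
      intro i hi
      rw [Finset.mem_Icc] at hi
      exact hα i hi.1 (le_trans hi.2 hk)
    rw [h1, ← Real.rpow_sum_of_pos hB0]
    congr 1
    clear h1 hk
    induction k with
    | zero => simp
    | succ n ih =>
      rw [Finset.sum_Icc_succ_top (by omega : 1 ≤ n + 1), ih, hexp n]
      ring
  intro k hk1 hk2
  rcases eq_or_lt_of_le hk2 with hkm | hkm
  · -- k = m case
    subst hkm
    obtain ⟨n, rfl⟩ : ∃ n, k = n + 1 := ⟨k - 1, (Nat.succ_pred_eq_of_pos hk1).symm⟩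
    simp only [Nat.add_sub_cancel] at *
    rw [hαm, hprod n le_rfl]
    have hdiv : B / B ^ (g / (2*u-1) * (1 - ((1-u)/u)^n))
        = B ^ (1 - g / (2*u-1) * (1 - ((1-u)/u)^n)) := by
      rw [Real.rpow_sub hB0, Real.rpow_one]
    rw [hdiv, ← Real.rpow_mul hB0.le, ← Real.rpow_mul hB0.le, ← Real.rpow_add hB0]
    congr 1
    have hD : u ^ (n+1) - (1 - u) ^ (n+1) ≠ 0 := by
      have : (1 - u) ^ (n+1) < u ^ (n+1) :=
        pow_lt_pow_left₀ (by linarith) h1u.le (Nat.succ_ne_zero n)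
      exact sub_ne_zero.mpr (ne_of_gt this)
    subst hg
    rw [div_pow]
    have hun : (u:ℝ) ^ n ≠ 0 := pow_ne_zero _ hu0'
    field_simp
    ring
  · -- k < m case
    have hk' : k ≤ m - 1 := Nat.le_sub_one_of_lt hkm
    obtain ⟨j, rfl⟩ : ∃ j, k = j + 1 := ⟨k - 1, (Nat.succ_pred_eq_of_pos hk1).symm⟩
    simp only [Nat.add_sub_cancel]
    rw [hprod j (by omega), hα (j+1) (by omega) hk', hexp j]
    rw [← Real.rpow_mul hB0.le, ← Real.rpow_mul hB0.le, ← Real.rpow_add hB0]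
    congr 1
    rw [div_pow, div_pow]
    field_simp
    ring
end

section
/- Let ν be a Borel measure on a metric space, F a closed set, f : F → X a bijection with C⁻¹|x−y|/|F| ≤ |f(x)−f(y)| ≤ C|x−y|/|F|, and suppose (ν∘f⁻¹)/ν(F) ≤ C ν. If x ∈ F and f(x) satisfies ν(B(f(x),r)) ≤ r^γ for all 0 < r < 1/N, then for all 0 < ρ < |F|/(CN): ν(B(x,ρ) ∩ F)/ν(F) ≤ C^{γ+1} (ρ/|F|)^γ. -/
open MeasureTheory

theorem stmt_8 {X : Type*} [MetricSpace X] [MeasurableSpace X] [BorelSpace X]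
    (ν : Measure X) [IsProbabilityMeasure ν] (F : Set X) (hF : IsClosed F)
    (f : X → X) (hbij : Set.BijOn f F Set.univ)
    (C : ℝ) (hC : 1 ≤ C)
    (hlip : ∀ x ∈ F, ∀ y ∈ F,
      C⁻¹ * (dist x y / Metric.diam F) ≤ dist (f x) (f y) ∧
      dist (f x) (f y) ≤ C * (dist x y / Metric.diam F))
    (hcomp : ∀ A : Set X, MeasurableSet A →
      ν (F ∩ f ⁻¹' A) / ν F ≤ ENNReal.ofReal C * ν A)
    (γ : ℝ) (hγ : 0 < γ) (N : ℕ) (hN : 1 ≤ N)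
    (x : X) (hx : x ∈ F)
    (hholder : ∀ r : ℝ, 0 < r → r < 1 / (N : ℝ) →
      ν (Metric.ball (f x) r) ≤ ENNReal.ofReal (r ^ γ)) :
    ∀ ρ : ℝ, 0 < ρ → ρ < Metric.diam F / (C * N) →
      ν (Metric.ball x ρ ∩ F) / ν F ≤
        ENNReal.ofReal (C ^ (γ + 1) * (ρ / Metric.diam F) ^ γ) := by
  intro ρ hρ hρlt
  have hC0 : (0:ℝ) < C := lt_of_lt_of_le one_pos hC
  have hN0 : (0:ℝ) < N := by exact_mod_cast hN
  have hD : (0:ℝ) < Metric.diam F := by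
    by_contra h
    push_neg at h
    have : Metric.diam F / (C * N) ≤ 0 :=
      div_nonpos_of_nonpos_of_nonneg h (by positivity)
    linarith
  set r : ℝ := C * (ρ / Metric.diam F) with hr
  have hr0 : 0 < r := by positivity
  have hrN : r < 1 / (N : ℝ) := by
    rw [lt_div_iff₀ (by positivity)] at hρlt
    rw [hr, lt_div_iff₀ hN0]
    have h2 : C * (ρ / Metric.diam F) * N = ρ * (C * N) / Metric.diam F := by
      field_simp
    rw [h2, div_lt_one hD]
    exact hρlt
  have hsub : Metric.ball x ρ ∩ F ⊆ F ∩ f ⁻¹' (Metric.ball (f x) r) := by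
    rintro y ⟨hy1, hy2⟩
    refine ⟨hy2, ?_⟩
    have hl := (hlip x hx y hy2).2
    simp only [Set.mem_preimage, Metric.mem_ball]
    rw [Metric.mem_ball, dist_comm] at hy1
    calc dist (f y) (f x) = dist (f x) (f y) := dist_comm _ _
      _ ≤ C * (dist x y / Metric.diam F) := hl
      _ < C * (ρ / Metric.diam F) := by gcongr
  have heq : C * r ^ γ = C ^ (γ + 1) * (ρ / Metric.diam F) ^ γ := by
    rw [hr, Real.mul_rpow hC0.le (by positivity), Real.rpow_add_one hC0.ne']
    ring
  calc ν (Metric.ball x ρ ∩ F) / ν F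
      ≤ ν (F ∩ f ⁻¹' (Metric.ball (f x) r)) / ν F := ENNReal.div_le_div_right (measure_mono hsub) _
    _ ≤ ENNReal.ofReal C * ν (Metric.ball (f x) r) :=
        hcomp _ measurableSet_ball
    _ ≤ ENNReal.ofReal C * ENNReal.ofReal (r ^ γ) := by
        gcongr
        exact hholder r hr0 hrN
    _ = ENNReal.ofReal (C * r ^ γ) := (ENNReal.ofReal_mul hC0.le).symm
    _ = ENNReal.ofReal (C ^ (γ + 1) * (ρ / Metric.diam F) ^ γ) := by rw [heq]
end

section
/- Fix integers m ≥ 1 and n ≥ 1, a word (a_1,…,a_n) ∈ ℕ^n, and reals α_1,…,α_m > 1. Let A be the union of cylinders I_{n+m}(a_1,…,a_n, b_1,…,b_m) over all (b_1,…,b_m) with b_i even and α_i^n ≤ b_i ≤ 2α_i^n for each i. Let two distinct such cylinders differ first at position n+k (1 ≤ k ≤ m). Then their distance is at least 1/(32·q(a_1,…,a_n,b_1,…,b_k)²), where q denotes the continued-fraction denominator of the word. -/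
/-- The Gauss map `x ↦ 1/x mod 1` (with `G 0 = 0`). -/
noncomputable def gaussMap (x : ℝ) : ℝ := Int.fract x⁻¹

/-- The level-`n` continued fraction cylinder with digits `a 1, …, a n`. -/
noncomputable def cfCyl (n : ℕ) (a : ℕ → ℕ) : Set ℝ :=
  {x | x ∈ Set.Ioo (0 : ℝ) 1 ∧ ∀ k, 1 ≤ k → k ≤ n → ⌊(gaussMap^[k - 1] x)⁻¹⌋ = (a k : ℤ)}

/-- Continued fraction denominators: `q 0 = 1`, `q 1 = a 1`,
`q (n+2) = a (n+2) * q (n+1) + q n`. -/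
def cfDenom (a : ℕ → ℕ) : ℕ → ℕ
  | 0 => 1
  | 1 => a 1
  | n + 2 => a (n + 2) * cfDenom a (n + 1) + cfDenom a n

def cfNum (a : ℕ → ℕ) : ℕ → ℕ
  | 0 => 0
  | 1 => 1
  | n + 2 => a (n + 2) * cfNum a (n + 1) + cfNum a n

lemma cfDenom_pos (a : ℕ → ℕ) (ha : ∀ i, 1 ≤ a i) : ∀ N, 1 ≤ cfDenom a N
  | 0 => le_refl _
  | 1 => ha 1
  | (N + 2) => by
      have h1 := cfDenom_pos a ha (N + 1)
      have := ha (N + 2)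
      simp only [cfDenom]
      nlinarith

lemma cfDenom_le_succ (a : ℕ → ℕ) (ha : ∀ i, 1 ≤ a i) : ∀ N, cfDenom a N ≤ cfDenom a (N + 1)
  | 0 => by simpa [cfDenom] using ha 1
  | (N + 1) => by
      have h1 := cfDenom_pos a ha (N + 1)
      have h0 := cfDenom_pos a ha N
      have := ha (N + 2)
      show cfDenom a (N+1) ≤ cfDenom a (N+2)
      simp only [cfDenom]
      nlinarith

lemma cfDet (a : ℕ → ℕ) : ∀ M : ℕ,
    (cfNum a (M + 1) : ℤ) * cfDenom a M - (cfNum a M : ℤ) * cfDenom a (M + 1) = (-1) ^ M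
  | 0 => by simp [cfNum, cfDenom]
  | (M + 1) => by
      have ih := cfDet a M
      show (cfNum a (M+2) : ℤ) * cfDenom a (M+1) - (cfNum a (M+1) : ℤ) * cfDenom a (M+2) = _
      simp only [cfNum, cfDenom]
      push_cast
      ring_nf
      ring_nf at ih
      linarith [ih]

lemma cf_expand (a : ℕ → ℕ) (ha : ∀ i, 1 ≤ a i) : ∀ M : ℕ, ∀ x : ℝ, x ∈ Set.Ioo (0:ℝ) 1 →
    (∀ j, 1 ≤ j → j ≤ M + 1 → ⌊(gaussMap^[j - 1] x)⁻¹⌋ = (a j : ℤ)) →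
    x * ((cfDenom a (M + 1) : ℝ) + gaussMap^[M + 1] x * cfDenom a M) =
      (cfNum a (M + 1) : ℝ) + gaussMap^[M + 1] x * cfNum a M
  | 0 => by
      intro x hx hd
      have h1 : ⌊x⁻¹⌋ = (a 1 : ℤ) := by simpa using hd 1 le_rfl le_rfl
      have hxne : x ≠ 0 := ne_of_gt hx.1
      have hg : gaussMap^[1] x = x⁻¹ - (a 1 : ℝ) := by
        simp [gaussMap, Int.fract, h1]
      rw [hg]
      simp [cfDenom, cfNum]
      field_simp
  | (M + 1) => by
      intro x hx hd
      have ih := cf_expand a ha M x hx (fun j h1 h2 => hd j h1 (by omega))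
      set t := gaussMap^[M + 1] x with htdef
      have htmem : 0 ≤ t ∧ t < 1 := by
        rw [htdef, Function.iterate_succ_apply']
        exact ⟨Int.fract_nonneg _, Int.fract_lt_one _⟩
      have hdig : ⌊t⁻¹⌋ = (a (M + 2) : ℤ) := by
        have := hd (M + 2) (by omega) le_rfl
        simpa [htdef] using this
      have htne : t ≠ 0 := by
        intro h
        rw [h] at hdig
        simp at hdig
        have := ha (M + 2); omega
      have hs : gaussMap^[M + 2] x = t⁻¹ - (a (M + 2) : ℝ) := by
        rw [show M + 2 = (M + 1) + 1 from rfl, Function.iterate_succ_apply', ← htdef]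
        simp [gaussMap, Int.fract, hdig]
      set s := gaussMap^[M + 2] x with hsdef
      have h1 : t * ((a (M + 2) : ℝ) + s) = 1 := by
        rw [hs]; field_simp; ring
      show x * ((cfDenom a (M + 2) : ℝ) + s * cfDenom a (M + 1)) =
        (cfNum a (M + 2) : ℝ) + s * cfNum a (M + 1)
      have hq2 : (cfDenom a (M + 2) : ℝ) = (a (M+2) : ℝ) * cfDenom a (M+1) + cfDenom a M := by
        simp [cfDenom]
      have hp2 : (cfNum a (M + 2) : ℝ) = (a (M+2) : ℝ) * cfNum a (M+1) + cfNum a M := by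
        simp [cfNum]
      rw [hq2, hp2]
      linear_combination ((a (M + 2) : ℝ) + s) * ih -
        (x * (cfDenom a M : ℝ) - (cfNum a M : ℝ)) * h1

lemma floor_inv_bounds (u : ℝ) (c : ℕ) (hc : 1 ≤ c) (hu0 : 0 ≤ u)
    (hfl : ⌊u⁻¹⌋ = (c : ℤ)) : 1 / ((c : ℝ) + 1) < u ∧ u ≤ 1 / (c : ℝ) := by
  have hune : u ≠ 0 := by
    intro h; rw [h] at hfl; simp at hfl; omega
  have hupos : 0 < u := lt_of_le_of_ne hu0 (Ne.symm hune)
  have h1 : (c : ℝ) ≤ u⁻¹ := by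
    have := Int.floor_le u⁻¹
    rw [hfl] at this; exact_mod_cast this
  have h2 : u⁻¹ < (c : ℝ) + 1 := by
    have := Int.lt_floor_add_one u⁻¹
    rw [hfl] at this; exact_mod_cast this
  have h3 : u * u⁻¹ = 1 := mul_inv_cancel₀ hune
  have hcpos : (0:ℝ) < (c:ℝ) := by exact_mod_cast hc
  constructor
  · rw [div_lt_iff₀ (by positivity)]
    nlinarith
  · rw [le_div_iff₀ hcpos]
    nlinarith

lemma gap_bound (A B u v : ℝ) (hA : 1 ≤ A) (hB : 1 ≤ B)
    (hAB : A + 2 ≤ B ∨ B + 2 ≤ A)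
    (hu1 : 1 / (A + 1) < u) (hu2 : u ≤ 1 / A)
    (hv1 : 1 / (B + 1) < v) (hv2 : v ≤ 1 / B) :
    1 / ((A + 1) * (B + 1)) ≤ |u - v| := by
  have hA0 : (0:ℝ) < A := by linarith
  have hB0 : (0:ℝ) < B := by linarith
  rcases hAB with h | h
  · -- A + 2 ≤ B : v ≤ 1/B ≤ 1/(A+2), u > 1/(A+1)
    have hv3 : v ≤ 1 / (A + 2) := le_trans hv2 (by
      rw [div_le_div_iff₀ hB0 (by linarith)]; linarith)
    have hgap : 1 / ((A + 1) * (B + 1)) ≤ u - v := by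
      have e1 : 1 / (A+1) - 1 / (A+2) = 1 / ((A+1)*(A+2)) := by
        field_simp; ring
      have e2 : 1 / ((A+1)*(B+1)) ≤ 1 / ((A+1)*(A+2)) := by
        rw [div_le_div_iff₀ (by positivity) (by positivity)]
        nlinarith
      linarith
    calc 1 / ((A + 1) * (B + 1)) ≤ u - v := hgap
      _ ≤ |u - v| := le_abs_self _
  · have hu3 : u ≤ 1 / (B + 2) := le_trans hu2 (by
      rw [div_le_div_iff₀ hA0 (by linarith)]; linarith)
    have hgap : 1 / ((A + 1) * (B + 1)) ≤ v - u := by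
      have e1 : 1 / (B+1) - 1 / (B+2) = 1 / ((B+1)*(B+2)) := by
        field_simp; ring
      have e2 : 1 / ((A+1)*(B+1)) ≤ 1 / ((B+1)*(B+2)) := by
        rw [div_le_div_iff₀ (by positivity) (by positivity)]
        nlinarith
      linarith
    calc 1 / ((A + 1) * (B + 1)) ≤ v - u := hgap
      _ ≤ |u - v| := by rw [abs_sub_comm]; exact le_abs_self _

set_option maxHeartbeats 1000000 in
theorem stmt_16 (m n : ℕ) (hm : 1 ≤ m) (hn : 1 ≤ n)
    (α : ℕ → ℝ) (hα : ∀ i, 1 ≤ i → i ≤ m → 1 < α i)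
    (w w' : ℕ → ℕ) (hwpos : ∀ i, 1 ≤ w i) (hw'pos : ∀ i, 1 ≤ w' i)
    (hwdig : ∀ i, n + 1 ≤ i → i ≤ n + m →
      Even (w i) ∧ α (i - n) ^ n ≤ (w i : ℝ) ∧ (w i : ℝ) ≤ 2 * α (i - n) ^ n)
    (hw'dig : ∀ i, n + 1 ≤ i → i ≤ n + m →
      Even (w' i) ∧ α (i - n) ^ n ≤ (w' i : ℝ) ∧ (w' i : ℝ) ≤ 2 * α (i - n) ^ n)
    (k : ℕ) (hk1 : 1 ≤ k) (hkm : k ≤ m)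
    (hagree : ∀ i, 1 ≤ i → i ≤ n + k - 1 → w i = w' i)
    (hdiff : w (n + k) ≠ w' (n + k)) :
    ∀ p ∈ cfCyl (n + m) w, ∀ q ∈ cfCyl (n + m) w',
      1 / (32 * (cfDenom w (n + k) : ℝ) ^ 2) ≤ dist p q := by
  intro p hp q hq
  obtain ⟨M, hM⟩ : ∃ M, n + k = M + 2 := ⟨n + k - 2, by omega⟩
  -- digits of p and q agree with w up to level M+1
  have hpd : ∀ j, 1 ≤ j → j ≤ M + 1 → ⌊(gaussMap^[j - 1] p)⁻¹⌋ = (w j : ℤ) :=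
    fun j h1 h2 => hp.2 j h1 (by omega)
  have hqd : ∀ j, 1 ≤ j → j ≤ M + 1 → ⌊(gaussMap^[j - 1] q)⁻¹⌋ = (w j : ℤ) := by
    intro j h1 h2
    rw [hagree j h1 (by omega)]
    exact hq.2 j h1 (by omega)
  have hxp := cf_expand w hwpos M p hp.1 hpd
  have hxq := cf_expand w hwpos M q hq.1 hqd
  set u := gaussMap^[M + 1] p with hudef
  set v := gaussMap^[M + 1] q with hvdef
  have humem : 0 ≤ u ∧ u < 1 := by
    rw [hudef, Function.iterate_succ_apply']
    exact ⟨Int.fract_nonneg _, Int.fract_lt_one _⟩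
  have hvmem : 0 ≤ v ∧ v < 1 := by
    rw [hvdef, Function.iterate_succ_apply']
    exact ⟨Int.fract_nonneg _, Int.fract_lt_one _⟩
  -- digits at position n + k
  have hud : ⌊u⁻¹⌋ = (w (n + k) : ℤ) := by
    have := hp.2 (n + k) (by omega) (by omega)
    rwa [show n + k - 1 = M + 1 from by omega] at this
  have hvd : ⌊v⁻¹⌋ = (w' (n + k) : ℤ) := by
    have := hq.2 (n + k) (by omega) (by omega)
    rwa [show n + k - 1 = M + 1 from by omega] at this
  have hub := floor_inv_bounds u (w (n + k)) (hwpos _) humem.1 hud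
  have hvb := floor_inv_bounds v (w' (n + k)) (hw'pos _) hvmem.1 hvd
  clear_value u v
  -- abbreviations
  set A : ℝ := (w (n + k) : ℝ) with hAdef
  set B : ℝ := (w' (n + k) : ℝ) with hBdef
  set Q1 : ℝ := (cfDenom w (M + 1) : ℝ) with hQ1def
  set Q0 : ℝ := (cfDenom w M : ℝ) with hQ0def
  have hA1 : (1:ℝ) ≤ A := by rw [hAdef]; exact_mod_cast hwpos _
  have hB1 : (1:ℝ) ≤ B := by rw [hBdef]; exact_mod_cast hw'pos _
  have hQ11 : (1:ℝ) ≤ Q1 := by rw [hQ1def]; exact_mod_cast cfDenom_pos w hwpos (M+1)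
  have hQ00 : (0:ℝ) ≤ Q0 := by rw [hQ0def]; positivity
  have hQ01 : Q0 ≤ Q1 := by
    rw [hQ0def, hQ1def]; exact_mod_cast cfDenom_le_succ w hwpos M
  clear_value A B Q1 Q0
  -- B ≤ 2 A
  have hBA : B ≤ 2 * A := by
    have h1 := hwdig (n + k) (by omega) (by omega)
    have h2 := hw'dig (n + k) (by omega) (by omega)
    rw [show n + k - n = k from by omega] at h1 h2
    have := h1.2.1
    have := h2.2.2
    rw [← hAdef] at *
    rw [← hBdef] at *
    linarith [h1.2.1, h2.2.2]
  --|wN - w'N| ≥ 2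
  have hev : A + 2 ≤ B ∨ B + 2 ≤ A := by
    obtain ⟨c, hc⟩ := (hwdig (n + k) (by omega) (by omega)).1
    obtain ⟨d, hd2⟩ := (hw'dig (n + k) (by omega) (by omega)).1
    have : w (n + k) + 2 ≤ w' (n + k) ∨ w' (n + k) + 2 ≤ w (n + k) := by omega
    rcases this with h | h
    · left; rw [hAdef, hBdef]; exact_mod_cast h
    · right; rw [hAdef, hBdef]; exact_mod_cast h
  have hgap := gap_bound A B u v hA1 hB1 hev hub.1 hub.2 hvb.1 hvb.2
  -- denominators
  set Du : ℝ := Q1 + u * Q0 with hDudef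
  set Dv : ℝ := Q1 + v * Q0 with hDvdef
  clear_value Du Dv
  have hDupos : 0 < Du := by
    have := humem.1
    rw [hDudef]; nlinarith
  have hDvpos : 0 < Dv := by
    have := hvmem.1
    rw [hDvdef]; nlinarith
  have hDu2 : Du ≤ 2 * Q1 := by
    rw [hDudef]; nlinarith [humem.1, humem.2]
  have hDv2 : Dv ≤ 2 * Q1 := by
    rw [hDvdef]; nlinarith [hvmem.1, hvmem.2]
  -- determinant
  have hdet : (cfNum w (M + 1) : ℝ) * Q0 - (cfNum w M : ℝ) * Q1 = (-1 : ℝ) ^ M := by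
    rw [hQ0def, hQ1def]
    exact_mod_cast cfDet w M
  -- difference formula
  have hkey : (p - q) * (Du * Dv) = (v - u) * (-1 : ℝ) ^ M := by
    rw [hDudef] at hxp ⊢
    rw [hDvdef] at hxq ⊢
    linear_combination (Q1 + v * Q0) * hxp - (Q1 + u * Q0) * hxq + (v - u) * hdet
  have habs : |p - q| * (Du * Dv) = |u - v| := by
    have h1 : |p - q| * (Du * Dv) = |(p - q) * (Du * Dv)| := by
      rw [abs_mul, abs_of_pos (mul_pos hDupos hDvpos)]
    rw [h1, hkey, abs_mul, abs_sub_comm]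
    simp [abs_pow]
  -- cfDenom at n+k
  have hqN : (cfDenom w (n + k) : ℝ) = A * Q1 + Q0 := by
    have hrec : cfDenom w (M + 2) = w (M + 2) * cfDenom w (M + 1) + cfDenom w M := rfl
    rw [hAdef, hQ1def, hQ0def, hM, hrec]
    push_cast
    ring
  have hqNpos : (0:ℝ) < (cfDenom w (n + k) : ℝ) := by
    rw [hqN]; nlinarith
  -- final arithmetic
  clear hxp hxq hkey hdet hud hvd hpd hqd hp hq hwdig hw'dig hα hagree hdiff
  clear hudef hvdef humem hvmem hub hvb hev hDudef hDvdef
  rw [Real.dist_eq]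
  have step1 : 1 ≤ |u - v| * ((A + 1) * (B + 1)) := by
    rw [div_le_iff₀ (by nlinarith : (0:ℝ) < (A + 1) * (B + 1))] at hgap
    linarith [hgap]
  have step2 : (A + 1) * (B + 1) * (Du * Dv) ≤ 32 * (cfDenom w (n + k) : ℝ) ^ 2 := by
    have hAQ : A * Q1 ≤ (cfDenom w (n + k) : ℝ) := by rw [hqN]; linarith
    have hprod : Du * Dv ≤ 4 * (Q1 * Q1) := by
      nlinarith [mul_le_mul hDu2 hDv2 hDvpos.le (by linarith : (0:ℝ) ≤ 2 * Q1)]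
    have hAB1 : (A + 1) * (B + 1) ≤ 8 * (A * A) := by nlinarith
    have hAQ2 : 32 * ((A * Q1) * (A * Q1)) ≤ 32 * (cfDenom w (n + k) : ℝ) ^ 2 := by
      nlinarith [mul_le_mul hAQ hAQ (by nlinarith : (0:ℝ) ≤ A * Q1) hqNpos.le]
    have h5 : (A + 1) * (B + 1) * (Du * Dv) ≤ 8 * (A * A) * (4 * (Q1 * Q1)) :=
      mul_le_mul hAB1 hprod (mul_pos hDupos hDvpos).le (by nlinarith)
    nlinarith [h5, hAQ2]
  rw [div_le_iff₀ (by positivity)]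
  have f2 : |p - q| * ((A + 1) * (B + 1) * (Du * Dv)) ≤
      |p - q| * (32 * (cfDenom w (n + k) : ℝ) ^ 2) :=
    mul_le_mul_of_nonneg_left step2 (abs_nonneg _)
  have f3 : |p - q| * ((A + 1) * (B + 1) * (Du * Dv)) = |u - v| * ((A + 1) * (B + 1)) := by
    rw [← habs]; ring
  linarith [step1, f2, f3.ge, f3.le]
end
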